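/- Let d ≥ 1 and consider the hypercube graph Q_d on vertex set {0,1}^d (vertices adjacent iff they differ in exactly one coordinate). For vertices v, w and a directed edge e of Q_d, let N(v, w; e) denote the number of shortest paths from v to w in Q_d that traverse the directed edge e. For v ∈ {0,1}^d let v̄ denote its antipode (coordinatewise complement). Then for every directed edge e of Q_d, Σ_{v ∈ {0,1}^d} N(v, v̄; e) = d!. Equivalently, if for each ordered antipodal pair (v, v̄) one unit of flow is distributed equally over all d! shortest paths from v to v̄, the total flow on every directed edge of Q_d equals 1. -/

import Mathlib

/-- The hypercube graph `Q_d` on vertex set `{0,1}^d`: two vertices are adjacent iff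
they differ in exactly one coordinate. -/
def cubeGraph (d : ℕ) : SimpleGraph (Fin d → Bool) where
  Adj x y := hammingDist x y = 1
  symm := by
    constructor
    intro x y h
    rwa [hammingDist_comm]
  loopless := by
    constructor
    intro x h
    simp [hammingDist_self] at h

namespace CubeAux
variable {d : ℕ}

def flipC (v : Fin d → Bool) (j : Fin d) : Fin d → Bool := Function.update v j (!v j)

def applyL (v : Fin d → Bool) (l : List (Fin d)) : Fin d → Bool := l.foldl flipC v

@[simp] lemma applyL_nil (v : Fin d → Bool) : applyL v ([] : List (Fin d)) = v := rfl
@[simp] lemma applyL_cons (v : Fin d → Bool) (a : Fin d) (l : List (Fin d)) :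
    applyL v (a :: l) = applyL (flipC v a) l := rfl

lemma applyL_eq (v : Fin d → Bool) (l : List (Fin d)) (j : Fin d) :
    applyL v l j = xor (v j) (decide (Odd (l.count j))) := by
  induction l generalizing v with
  | nil => simp
  | cons a l ih =>
    rw [applyL_cons, ih]
    rcases eq_or_ne j a with rfl | hja
    · simp only [flipC, Function.update_self, List.count_cons_self, Nat.odd_add_one,
        decide_not]
      cases v j <;> cases h : decide (Odd (l.count j)) <;> simp [h]
    · simp [flipC, Function.update_of_ne hja, List.count_cons_of_ne hja.symm]

lemma applyL_applyL (v : Fin d → Bool) (l : List (Fin d)) : applyL (applyL v l) l = v := by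
  funext j
  rw [applyL_eq, applyL_eq, Bool.xor_assoc, Bool.xor_self, Bool.xor_false]

lemma hammingDist_eq (a b : Fin d → Bool) :
    hammingDist a b = (Finset.univ.filter fun i => a i ≠ b i).card := rfl

noncomputable def dartCoord {a b : Fin d → Bool} (h : hammingDist a b = 1) : Fin d :=
  (Finset.card_eq_one.mp ((hammingDist_eq a b).symm.trans h)).choose

lemma dartCoord_spec {a b : Fin d → Bool} (h : hammingDist a b = 1) :
    (Finset.univ.filter fun i => a i ≠ b i) = {dartCoord h} :=
  (Finset.card_eq_one.mp ((hammingDist_eq a b).symm.trans h)).choose_spec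

lemma dartCoord_ne {a b : Fin d → Bool} (h : hammingDist a b = 1) :
    a (dartCoord h) ≠ b (dartCoord h) := by
  have : dartCoord h ∈ (Finset.univ.filter fun i => a i ≠ b i) := by
    rw [dartCoord_spec h]; exact Finset.mem_singleton_self _
  simpa using this

lemma eq_dartCoord {a b : Fin d → Bool} (h : hammingDist a b = 1) {k : Fin d}
    (hk : a k ≠ b k) : k = dartCoord h := by
  have : k ∈ (Finset.univ.filter fun i => a i ≠ b i) := by simpa using hk
  rwa [dartCoord_spec h, Finset.mem_singleton] at this

lemma flip_dartCoord {a b : Fin d → Bool} (h : hammingDist a b = 1) :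
    flipC a (dartCoord h) = b := by
  funext k
  rcases eq_or_ne k (dartCoord h) with rfl | hk
  · have := dartCoord_ne h
    simp only [flipC, Function.update_self]
    cases hab : a (dartCoord h) <;> cases hbb : b (dartCoord h) <;> simp_all
  · have : a k = b k := by
      by_contra hne
      exact hk (eq_dartCoord h hne)
    simpa [flipC, Function.update_of_ne hk] using this

lemma adj_flipC (v : Fin d → Bool) (j : Fin d) : (cubeGraph d).Adj v (flipC v j) := by
  show hammingDist v (flipC v j) = 1
  rw [hammingDist_eq]
  have : (Finset.univ.filter fun i => v i ≠ flipC v j i) = {j} := by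
    ext k
    rcases eq_or_ne k j with rfl | hk
    · rw [Finset.mem_filter]; simp [flipC, Function.update_self]
    · rw [Finset.mem_filter]; simp [flipC, Function.update_of_ne hk, hk]
  rw [this, Finset.card_singleton]

end CubeAux

namespace CubeAux
variable {d : ℕ}

noncomputable def wcoords {a b : Fin d → Bool} (p : (cubeGraph d).Walk a b) : List (Fin d) :=
  p.darts.map (fun D => dartCoord (show hammingDist D.fst D.snd = 1 from D.adj))

@[simp] lemma wcoords_nil (a : Fin d → Bool) :
    wcoords (SimpleGraph.Walk.nil : (cubeGraph d).Walk a a) = [] := rfl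

@[simp] lemma wcoords_cons {a c b : Fin d → Bool} (h : (cubeGraph d).Adj a c)
    (q : (cubeGraph d).Walk c b) :
    wcoords (SimpleGraph.Walk.cons h q) = dartCoord (show hammingDist a c = 1 from h) :: wcoords q := rfl

@[simp] lemma length_wcoords {a b : Fin d → Bool} (p : (cubeGraph d).Walk a b) :
    (wcoords p).length = p.length := by
  simp [wcoords]

lemma applyL_wcoords {a b : Fin d → Bool} (p : (cubeGraph d).Walk a b) :
    applyL a (wcoords p) = b := by
  induction p with
  | nil => simp
  | cons h q ih =>
    rw [wcoords_cons, applyL_cons, flip_dartCoord]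
    exact ih

def walkOfList (v : Fin d → Bool) : (l : List (Fin d)) → (cubeGraph d).Walk v (applyL v l)
  | [] => SimpleGraph.Walk.nil
  | a :: l => SimpleGraph.Walk.cons (adj_flipC v a) (walkOfList (flipC v a) l)

@[simp] lemma length_walkOfList (v : Fin d → Bool) (l : List (Fin d)) :
    (walkOfList v l).length = l.length := by
  induction l generalizing v with
  | nil => rfl
  | cons a l ih => simp [walkOfList, ih]

lemma dartCoord_flipC (v : Fin d → Bool) (j : Fin d) :
    dartCoord (show hammingDist v (flipC v j) = 1 from adj_flipC v j) = j := by
  symm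
  apply eq_dartCoord
  simp [flipC]

@[simp] lemma wcoords_walkOfList (v : Fin d → Bool) (l : List (Fin d)) :
    wcoords (walkOfList v l) = l := by
  induction l generalizing v with
  | nil => rfl
  | cons a l ih => simp [walkOfList, wcoords_cons, dartCoord_flipC, ih]

lemma wcoords_inj : ∀ {a b c : Fin d → Bool} (p : (cubeGraph d).Walk a b)
    (q : (cubeGraph d).Walk a c), wcoords p = wcoords q → b = c ∧ HEq p q := by
  intro a b c p
  induction p with
  | nil =>
    intro q hq
    cases q with
    | nil => exact ⟨rfl, HEq.rfl⟩
    | cons h' q' => simp [wcoords_cons] at hq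
  | @cons a m b h p' ih =>
    intro q hq
    cases q with
    | nil => simp [wcoords_cons] at hq
    | @cons _ m₂ _ h₂ q' =>
      rw [wcoords_cons, wcoords_cons, List.cons_eq_cons] at hq
      obtain ⟨hhead, htail⟩ := hq
      have hm : m = m₂ := by
        rw [← flip_dartCoord (show hammingDist a m = 1 from h),
          ← flip_dartCoord (show hammingDist a m₂ = 1 from h₂), hhead]
      subst hm
      obtain ⟨hbc, hpq⟩ := ih q' htail
      subst hbc
      exact ⟨rfl, heq_of_eq (by rw [eq_of_heq hpq])⟩

lemma darts_mem_walkOfList (v : Fin d → Bool) (t : List (Fin d)) (j : Fin d)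
    (u : List (Fin d)) :
    (⟨(applyL v t, flipC (applyL v t) j), adj_flipC _ _⟩ : (cubeGraph d).Dart)
      ∈ (walkOfList v (t ++ j :: u)).darts := by
  induction t generalizing v with
  | nil => exact List.mem_cons_self
  | cons a t ih =>
    rw [List.cons_append]
    exact List.mem_cons_of_mem _ (ih (flipC v a))

lemma dart_decomp {a b : Fin d → Bool} (p : (cubeGraph d).Walk a b)
    (D : (cubeGraph d).Dart) (hD : D ∈ p.darts) :
    ∃ t u, wcoords p = t ++ dartCoord (show hammingDist D.fst D.snd = 1 from D.adj) :: u ∧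
      applyL a t = D.fst := by
  induction p with
  | nil => simp at hD
  | @cons a c b h q ih =>
    rw [SimpleGraph.Walk.darts_cons, List.mem_cons] at hD
    rcases hD with rfl | hD
    · exact ⟨[], wcoords q, by simp [wcoords_cons], rfl⟩
    · obtain ⟨t, u, ht, hfst⟩ := ih hD
      refine ⟨dartCoord (show hammingDist a c = 1 from h) :: t, u, by simp [wcoords_cons, ht], ?_⟩
      rw [applyL_cons, flip_dartCoord]
      exact hfst

end CubeAux

namespace CubeAux
variable {d : ℕ}

lemma sum_count (l : List (Fin d)) : ∑ j : Fin d, l.count j = l.length := by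
  induction l with
  | nil => simp
  | cons a l ih =>
    simp only [List.count_cons, List.length_cons, Finset.sum_add_distrib, ih]
    congr 1
    simp

lemma counts_one {l : List (Fin d)} (hlen : l.length = d)
    (hodd : ∀ j, Odd (l.count j)) (j : Fin d) : l.count j = 1 := by
  by_contra hne
  have h1 : ∀ k : Fin d, 1 ≤ l.count k := fun k => (hodd k).pos
  have hlt : (1 : ℕ) < l.count j := lt_of_le_of_ne (h1 j) (Ne.symm hne)
  have : ∑ _k : Fin d, 1 < ∑ k : Fin d, l.count k :=
    Finset.sum_lt_sum (fun k _ => h1 k) ⟨j, Finset.mem_univ j, hlt⟩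
  rw [sum_count, hlen] at this
  simp at this

lemma hamming_le_length {a b : Fin d → Bool} (p : (cubeGraph d).Walk a b) :
    hammingDist a b ≤ p.length := by
  induction p with
  | nil => simp
  | @cons a c b h q ih =>
    calc hammingDist a b ≤ hammingDist a c + hammingDist c b := hammingDist_triangle _ _ _
    _ ≤ 1 + q.length := by
        have : hammingDist a c = 1 := h
        omega
    _ = (SimpleGraph.Walk.cons h q).length := by simp [Nat.add_comm]

lemma applyL_antipode {v : Fin d → Bool} {l : List (Fin d)}
    (hc : ∀ j, l.count j = 1) : applyL v l = fun j => !(v j) := by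
  funext j
  rw [applyL_eq, hc j]
  simp [Nat.odd_iff]

lemma hamming_antipode (v : Fin d → Bool) :
    hammingDist v (fun j => !(v j)) = d := by
  rw [hammingDist_eq]
  have : (Finset.univ.filter fun i => v i ≠ !(v i)) = Finset.univ := by
    ext i; simp
  rw [this, Finset.card_univ, Fintype.card_fin]

lemma dist_antipode (v : Fin d → Bool) :
    (cubeGraph d).dist v (fun j => !(v j)) = d := by
  have hcount : ∀ j : Fin d, (List.finRange d).count j = 1 := fun j =>
    List.count_eq_one_of_mem (List.nodup_finRange d) (List.mem_finRange j)
  have hend : applyL v (List.finRange d) = fun j => !(v j) := applyL_antipode hcount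
  let p : (cubeGraph d).Walk v (fun j => !(v j)) :=
    (walkOfList v (List.finRange d)).copy rfl hend
  have hlen : p.length = d := by
    simp [p, List.length_finRange]
  apply le_antisymm
  · calc (cubeGraph d).dist v (fun j => !(v j)) ≤ p.length := SimpleGraph.dist_le p
    _ = d := hlen
  · obtain ⟨q, hq⟩ := (p.reachable).exists_walk_length_eq_dist
    calc d = hammingDist v (fun j => !(v j)) := (hamming_antipode v).symm
    _ ≤ q.length := hamming_le_length q
    _ = _ := hq

lemma takeWhile_append_eq {i : Fin d} {t u : List (Fin d)} (ht : i ∉ t) :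
    (t ++ i :: u).takeWhile (· != i) = t := by
  induction t with
  | nil => simp
  | cons a t ih =>
    have ha : a ≠ i := fun h => ht (h ▸ (List.mem_cons_self (a := a) (l := t)))
    have ht' : i ∉ t := fun h => ht (List.mem_cons_of_mem a h)
    simp [List.takeWhile_cons, ha, ih ht']

end CubeAux

namespace CubeAux
variable {d : ℕ}

@[simp] lemma wcoords_copy {a b a' b' : Fin d → Bool} (p : (cubeGraph d).Walk a b)
    (ha : a = a') (hb : b = b') : wcoords (p.copy ha hb) = wcoords p := by
  subst ha; subst hb; rfl

lemma odd_counts_of_antipode {v : Fin d → Bool} {l : List (Fin d)}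
    (h : applyL v l = fun j => !(v j)) (j : Fin d) : Odd (l.count j) := by
  have hj := congrFun h j
  rw [applyL_eq] at hj
  by_contra hodd
  simp only [hodd, decide_false, Bool.xor_false] at hj
  cases hv : v j <;> rw [hv] at hj <;> simp at hj

end CubeAux


open CubeAux

/-- For every directed edge `(x, y)` of the hypercube graph `Q_d` (`d ≥ 1`), the number
of shortest paths from `v` to its antipode `v̄` traversing `(x, y)`, summed over all
vertices `v`, equals `d!`.  Equivalently, distributing one unit of flow equally over all
`d!` shortest paths from `v` to `v̄`, for every ordered antipodal pair `(v, v̄)`, yields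
total flow exactly `1` on every directed edge. -/
theorem sum_antipodal_shortest_paths_through_edge
    (d : ℕ) (hd : 1 ≤ d) (x y : Fin d → Bool) (hxy : (cubeGraph d).Adj x y) :
    ∑ v : Fin d → Bool,
      {p : (cubeGraph d).Walk v (fun j => !(v j)) |
        p.length = (cubeGraph d).dist v (fun j => !(v j)) ∧
        (⟨(x, y), hxy⟩ : (cubeGraph d).Dart) ∈ p.darts}.ncard
      = Nat.factorial d := by
  classical
  have hxy' : hammingDist x y = 1 := hxy
  set i : Fin d := dartCoord hxy' with hi
  have hflipx : flipC x i = y := flip_dartCoord hxy'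
  set P : Finset (List (Fin d)) := (List.finRange d).permutations.toFinset with hP
  set f : List (Fin d) → (Fin d → Bool) := fun l => applyL x (l.takeWhile (· != i)) with hf
  have key : ∀ v : Fin d → Bool,
      {p : (cubeGraph d).Walk v (fun j => !(v j)) |
        p.length = (cubeGraph d).dist v (fun j => !(v j)) ∧
        (⟨(x, y), hxy⟩ : (cubeGraph d).Dart) ∈ p.darts}.ncard
      = (P.filter fun l => f l = v).card := by
    intro v
    set S : Set ((cubeGraph d).Walk v (fun j => !(v j))) :=
      {p | p.length = (cubeGraph d).dist v (fun j => !(v j)) ∧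
        (⟨(x, y), hxy⟩ : (cubeGraph d).Dart) ∈ p.darts} with hS
    have hmaps : ∀ p ∈ S, wcoords p ∈ (P.filter fun l => f l = v : Finset _) := by
      rintro p ⟨hplen, hpd⟩
      have hlen : (wcoords p).length = d := by
        rw [length_wcoords, hplen, dist_antipode]
      have hend := applyL_wcoords p
      have hone : ∀ j, (wcoords p).count j = 1 :=
        counts_one hlen (odd_counts_of_antipode hend)
      have hperm : (wcoords p).Perm (List.finRange d) := by
        rw [List.perm_iff_count]
        intro j
        rw [hone j, List.count_eq_one_of_mem (List.nodup_finRange d) (List.mem_finRange j)]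
      have hnodup : (wcoords p).Nodup := hperm.nodup_iff.mpr (List.nodup_finRange d)
      obtain ⟨t, u, hdecomp, hfst⟩ := dart_decomp p ⟨(x, y), hxy⟩ hpd
      have hit : i ∉ t := by
        rw [hdecomp] at hnodup
        intro hmem
        exact (List.disjoint_of_nodup_append hnodup) hmem ((List.mem_cons_self (a := i) (l := u)))
      rw [Finset.mem_filter]
      refine ⟨List.mem_toFinset.mpr (List.mem_permutations.mpr hperm), ?_⟩
      rw [hf]
      simp only
      have hfst' : applyL v t = x := hfst
      rw [hdecomp, takeWhile_append_eq hit, ← hfst', applyL_applyL]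
    have hinj : Set.InjOn wcoords S := by
      intro p _ q _ h
      exact eq_of_heq (wcoords_inj p q h).2
    have hsurj : Set.SurjOn wcoords S ↑(P.filter fun l => f l = v) := by
      intro l hl
      rw [Finset.mem_coe, Finset.mem_filter] at hl
      obtain ⟨hlP, hlf⟩ := hl
      have hperm : l.Perm (List.finRange d) :=
        List.mem_permutations.mp (List.mem_toFinset.mp hlP)
      have hcount : ∀ j, l.count j = 1 := fun j => by
        rw [hperm.count_eq, List.count_eq_one_of_mem (List.nodup_finRange d) (List.mem_finRange j)]
      have hend : applyL v l = fun j => !(v j) := applyL_antipode hcount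
      have hnodup : l.Nodup := hperm.nodup_iff.mpr (List.nodup_finRange d)
      obtain ⟨t, u, rfl⟩ := List.append_of_mem (hperm.mem_iff.mpr (List.mem_finRange i))
      have hit : i ∉ t := fun hmem =>
        (List.disjoint_of_nodup_append hnodup) hmem ((List.mem_cons_self (a := i) (l := u)))
      have hxt : applyL x t = v := by
        rw [← hlf, hf]
        simp only
        rw [takeWhile_append_eq hit]
      have hvt : applyL v t = x := by rw [← hxt, applyL_applyL]
      refine ⟨(walkOfList v (t ++ i :: u)).copy rfl hend, ⟨?_, ?_⟩, ?_⟩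
      · rw [SimpleGraph.Walk.length_copy, length_walkOfList, dist_antipode,
          hperm.length_eq, List.length_finRange]
      · rw [SimpleGraph.Walk.darts_copy]
        have hmem := darts_mem_walkOfList v t i u
        have hD : (⟨(applyL v t, flipC (applyL v t) i), adj_flipC _ _⟩ :
            (cubeGraph d).Dart) = ⟨(x, y), hxy⟩ := by
          apply SimpleGraph.Dart.ext
          rw [hvt]
          show (x, flipC x i) = (x, y)
          rw [hflipx]
        rwa [hD] at hmem
      · rw [wcoords_copy, wcoords_walkOfList]
    have hbij : Set.BijOn wcoords S ↑(P.filter fun l => f l = v) :=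
      ⟨hmaps, hinj, hsurj⟩
    calc S.ncard = (wcoords '' S).ncard := (Set.ncard_image_of_injOn hinj).symm
    _ = (↑(P.filter fun l => f l = v) : Set (List (Fin d))).ncard := by rw [hbij.image_eq]
    _ = (P.filter fun l => f l = v).card := Set.ncard_coe_finset _
  calc ∑ v : Fin d → Bool,
      {p : (cubeGraph d).Walk v (fun j => !(v j)) |
        p.length = (cubeGraph d).dist v (fun j => !(v j)) ∧
        (⟨(x, y), hxy⟩ : (cubeGraph d).Dart) ∈ p.darts}.ncard
      = ∑ v : Fin d → Bool, (P.filter fun l => f l = v).card := by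
        exact Finset.sum_congr rfl fun v _ => key v
  _ = P.card := (Finset.card_eq_sum_card_fiberwise fun l _ => Finset.mem_univ (f l)).symm
  _ = Nat.factorial d := by
      rw [hP, List.toFinset_card_of_nodup (List.nodup_permutations _ (List.nodup_finRange d)),
        List.length_permutations, List.length_finRange]
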